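/- arXiv:2210.10845 — 2 statements merged into one kernel-verified Lean document; each statement's English description precedes it below -/
import Mathlib

section
/- Let $u\in L^1(\Omega)$ and $f\in L^1(\partial\Omega)$ be such that the trace $Tu$ of $u$ equals $f$ $\mathcal{H}$-almost everywhere on $\partial\Omega$. Then for Lebesgue-almost every $t\in\mathbb{R}$, the trace of the superlevel set satisfies $T\chi_{\{u>t\}}=\chi_{\{f>t\}}$ $\mathcal{H}$-almost everywhere on $\partial\Omega$. -/
open MeasureTheory Filter Set Topology
open scoped ENNReal NNReal

section Prelude

variable {X : Type*} [MetricSpace X] [MeasurableSpace X]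

/-- Pointwise (upper) local Lipschitz constant of a real valued function. -/
noncomputable def lipConst (u : X → ℝ) (x : X) : ℝ≥0∞ :=
  Filter.limsup
    (fun r : ℝ => ⨆ y ∈ Metric.ball x r, ENNReal.ofReal (|u y - u x| / r))
    (nhdsWithin (0:ℝ) (Set.Ioi 0))

/-- Total variation of `u` on `U`, defined by relaxation of the integral of the local
Lipschitz constant along locally Lipschitz approximations converging in `L¹_loc(U)`
(the metric-measure-space BV energy of Miranda). -/
noncomputable def TV (μ : Measure X) (u : X → ℝ) (U : Set X) : ℝ≥0∞ :=
  ⨅ (v : ℕ → X → ℝ) (_ : (∀ n, LocallyLipschitz (v n)) ∧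
      ∀ K : Set X, K ⊆ U → IsCompact K →
        Filter.Tendsto (fun n => ∫ x in K, |v n x - u x| ∂μ) Filter.atTop (nhds (0:ℝ))),
    Filter.liminf (fun n => ∫⁻ x in U, lipConst (v n) x ∂μ) Filter.atTop

/-- Perimeter of a set `E` in `U`. -/
noncomputable def perim (μ : Measure X) (E U : Set X) : ℝ≥0∞ :=
  TV μ (E.indicator fun _ => (1:ℝ)) U

/-- `u` has trace `t` at the boundary point `z` of `Ω`. -/
def HasTraceAt (μ : Measure X) (Ω : Set X) (u : X → ℝ) (z : X) (t : ℝ) : Prop :=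
  Filter.Tendsto (fun r : ℝ => ⨍ y in Metric.ball z r ∩ Ω, |u y - t| ∂μ)
    (nhdsWithin (0:ℝ) (Set.Ioi 0)) (nhds (0:ℝ))

/-- Codimension-one Hausdorff premeasure at scale `δ` (covers by balls of radius `< δ`). -/
noncomputable def codimOneContent (μ : Measure X) (δ : ℝ) (E : Set X) : ℝ≥0∞ :=
  ⨅ (c : ℕ → X × ℝ) (_ : (∀ i, 0 < (c i).2 ∧ (c i).2 < δ) ∧
      E ⊆ ⋃ i, Metric.ball (c i).1 (c i).2),
    ∑' i, μ (Metric.ball (c i).1 (c i).2) / ENNReal.ofReal (c i).2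

/-- Codimension-one Hausdorff measure (as a set function). -/
noncomputable def codimOneHausdorff (μ : Measure X) (E : Set X) : ℝ≥0∞ :=
  ⨆ (δ : ℝ) (_ : (0:ℝ) < δ), codimOneContent μ δ E

/-- `μ` is a (globally) doubling measure: `0 < μ(B(x,2r)) ≤ C μ(B(x,r)) < ∞`. -/
def IsDoubling (μ : Measure X) : Prop :=
  ∃ C : ℝ≥0∞, 1 ≤ C ∧ ∀ (x : X) (r : ℝ), 0 < r →
    0 < μ (Metric.ball x (2*r)) ∧ μ (Metric.ball x (2*r)) ≤ C * μ (Metric.ball x r) ∧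
      C * μ (Metric.ball x r) < ⊤

/-- `H|∂Ω` is lower codimension-1 Ahlfors regular. -/
def LowerCodimOneAR (μ H : Measure X) (Ω : Set X) : Prop :=
  ∃ C : ℝ≥0∞, 0 < C ∧ ∀ x ∈ frontier Ω, ∀ r : ℝ, 0 < r →
    r < 2 * Metric.diam (frontier Ω) →
    C * (μ (Metric.ball x r) / ENNReal.ofReal r) ≤ H (Metric.ball x r ∩ frontier Ω)

/-- `H|∂Ω` is doubling. -/
def BoundaryDoubling (H : Measure X) (Ω : Set X) : Prop :=
  ∃ C : ℝ≥0∞, 1 ≤ C ∧ ∀ x ∈ frontier Ω, ∀ r : ℝ, 0 < r →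
    H (Metric.ball x (2*r) ∩ frontier Ω) ≤ C * H (Metric.ball x r ∩ frontier Ω)

/-- `Ω` is an `A`-uniform domain. -/
def IsUniformDomain (Ω : Set X) (A : ℝ) : Prop :=
  1 ≤ A ∧ ∀ x ∈ Ω, ∀ y ∈ Ω, ∃ γ : ℝ → X, ContinuousOn γ (Set.Icc 0 1) ∧
    γ 0 = x ∧ γ 1 = y ∧ (∀ t ∈ Set.Icc (0:ℝ) 1, γ t ∈ Ω) ∧
    eVariationOn γ (Set.Icc 0 1) ≤ ENNReal.ofReal (A * dist x y) ∧
    ∀ t ∈ Set.Icc (0:ℝ) 1,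
      min (eVariationOn γ (Set.Icc 0 t)) (eVariationOn γ (Set.Icc t 1)) ≤
        ENNReal.ofReal (A * Metric.infDist (γ t) Ωᶜ)

/-- `E` is a weak solution set to the Dirichlet problem in `Ω` with boundary data `χ_F`. -/
def IsWeakSolSet (μ : Measure X) (Ω F E : Set X) : Prop :=
  (∀ x, x ∉ Ω → (x ∈ E ↔ x ∈ F)) ∧
  ∀ E' : Set X, (∀ x, x ∉ Ω → (x ∈ E' ↔ x ∈ F)) →
    perim μ E (closure Ω) ≤ perim μ E' (closure Ω)

/-- Minimal weak solution set for boundary data `χ_F`. -/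
def IsMinimalWeakSolSet (μ : Measure X) (Ω F E : Set X) : Prop :=
  IsWeakSolSet μ Ω F E ∧ ∀ E', IsWeakSolSet μ Ω F E' → μ (E \ E') = 0

/-- `∂Ω` has positive mean curvature (Lahti–Malý–Shanmugalingam–Speight). -/
def PosMeanCurvature (μ : Measure X) (Ω : Set X) : Prop :=
  ∀ x ∈ frontier Ω, ∃ (φ : ℝ → ℝ) (rx : ℝ), 0 < rx ∧
    (∀ r, 0 < r → 0 < φ r) ∧ (∀ r s, 0 < r → r ≤ s → φ r ≤ φ s) ∧
    ∀ r : ℝ, 0 < r → r < rx → perim μ (Metric.ball x r) Set.univ < ⊤ →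
      ∀ E : Set X, IsMinimalWeakSolSet μ Ω (Metric.ball x r) E →
        μ (Metric.ball x (φ r) \ E) = 0

/-- Membership in the class `𝒦_{ψ₁,ψ₂,f,g}(Ω)`. -/
def memK (μ H : Measure X) (Ω : Set X) (ψ₁ ψ₂ : X → EReal) (f g : X → ℝ)
    (u : X → ℝ) : Prop :=
  MeasureTheory.IntegrableOn u Ω μ ∧ TV μ u Ω < ⊤ ∧
  (∀ᵐ x ∂μ.restrict Ω, ψ₁ x ≤ (u x : EReal) ∧ (u x : EReal) ≤ ψ₂ x) ∧
  (∀ᵐ z ∂H.restrict (frontier Ω), ∃ t : ℝ, HasTraceAt μ Ω u z t ∧ f z ≤ t ∧ t ≤ g z)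

/-- Strong solution to the `𝒦_{ψ₁,ψ₂,f,g}`-obstacle problem. -/
def IsStrongSolution (μ H : Measure X) (Ω : Set X) (ψ₁ ψ₂ : X → EReal) (f g : X → ℝ)
    (u : X → ℝ) : Prop :=
  memK μ H Ω ψ₁ ψ₂ f g u ∧ ∀ v, memK μ H Ω ψ₁ ψ₂ f g v → TV μ u Ω ≤ TV μ v Ω

/-- Minimal strong solution to the `𝒦_{ψ₁,ψ₂,f,g}`-obstacle problem. -/
def IsMinimalStrongSolution (μ H : Measure X) (Ω : Set X) (ψ₁ ψ₂ : X → EReal)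
    (f g : X → ℝ) (u : X → ℝ) : Prop :=
  IsStrongSolution μ H Ω ψ₁ ψ₂ f g u ∧
  ∀ v, IsStrongSolution μ H Ω ψ₁ ψ₂ f g v → ∀ᵐ x ∂μ.restrict Ω, u x ≤ v x

/-- Maximal strong solution to the `𝒦_{ψ₁,ψ₂,f,g}`-obstacle problem. -/
def IsMaximalStrongSolution (μ H : Measure X) (Ω : Set X) (ψ₁ ψ₂ : X → EReal)
    (f g : X → ℝ) (u : X → ℝ) : Prop :=
  IsStrongSolution μ H Ω ψ₁ ψ₂ f g u ∧
  ∀ v, IsStrongSolution μ H Ω ψ₁ ψ₂ f g v → ∀ᵐ x ∂μ.restrict Ω, v x ≤ u x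

/-- Characteristic function of a set, viewed as an `EReal`-valued obstacle. -/
noncomputable def setObstacle (A : Set X) : X → EReal :=
  fun x => ((A.indicator (fun _ => (1:ℝ)) x : ℝ) : EReal)

/-- Membership in the class `𝒦_{A,B,F,G}(Ω)` (characteristic-function data). -/
def memKSet (μ H : Measure X) (Ω A B F G : Set X) (u : X → ℝ) : Prop :=
  memK μ H Ω (setObstacle A) (setObstacle B)
    (F.indicator fun _ => (1:ℝ)) (G.indicator fun _ => (1:ℝ)) u

/-- `E` is a strong solution set to the `𝒦_{A,B,F,G}`-obstacle problem. -/
def IsStrongSolutionSet (μ H : Measure X) (Ω A B F G : Set X) (E : Set X) : Prop :=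
  memKSet μ H Ω A B F G (E.indicator fun _ => (1:ℝ)) ∧
  ∀ v, memKSet μ H Ω A B F G v →
    TV μ (E.indicator fun _ => (1:ℝ)) Ω ≤ TV μ v Ω

/-- `E` is the minimal strong solution set to the `𝒦_{A,B,F,G}`-obstacle problem. -/
def IsMinimalStrongSolutionSet (μ H : Measure X) (Ω A B F G : Set X) (E : Set X) : Prop :=
  IsStrongSolutionSet μ H Ω A B F G E ∧
  ∀ E', IsStrongSolutionSet μ H Ω A B F G E' → μ (E \ E') = 0

/-- Membership in `𝒦̃_{A,B,F,G}(Ω)`: pointwise everywhere obstacle and boundary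
constraints, for characteristic-function data. -/
def memKt (Ω A B F G : Set X) (u : X → ℝ) : Prop :=
  (∀ x ∈ Ω, A.indicator (fun _ => (1:ℝ)) x ≤ u x ∧ u x ≤ B.indicator (fun _ => (1:ℝ)) x) ∧
  (∀ x ∉ Ω, F.indicator (fun _ => (1:ℝ)) x ≤ u x ∧ u x ≤ G.indicator (fun _ => (1:ℝ)) x)

/-- `u` is an `ε`-weak solution to the `𝒦_{A,B,F,G}`-obstacle problem. -/
def IsEpsWeakSolution (μ : Measure X) (Ω A B F G : Set X) (ε : ℝ) (u : X → ℝ) : Prop :=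
  memKt Ω A B F G u ∧ MeasureTheory.LocallyIntegrable u μ ∧
  ∀ v, memKt Ω A B F G v → MeasureTheory.LocallyIntegrable v μ →
    TV μ u (Metric.thickening ε Ω) ≤ TV μ v (Metric.thickening ε Ω)

/-- Membership in the Dirichlet class with boundary data `h`. -/
def memD (μ H : Measure X) (Ω : Set X) (h : X → ℝ) (u : X → ℝ) : Prop :=
  MeasureTheory.IntegrableOn u Ω μ ∧ TV μ u Ω < ⊤ ∧
  ∀ᵐ z ∂H.restrict (frontier Ω), HasTraceAt μ Ω u z (h z)

/-- Strong solution to the Dirichlet problem for least gradients with data `h`. -/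
def IsDirichletStrongSolution (μ H : Measure X) (Ω : Set X) (h : X → ℝ)
    (u : X → ℝ) : Prop :=
  memD μ H Ω h u ∧ ∀ v, memD μ H Ω h v → TV μ u Ω ≤ TV μ v Ω

end Prelude

lemma trace_squeeze {X : Type*} [MetricSpace X] [MeasurableSpace X]
    (μ : Measure X) (Ω : Set X) (u v : X → ℝ) (z : X) (c c' δ : ℝ)
    (hδ : 0 < δ)
    (hfin : ∀ r : ℝ, 0 < r → μ (Metric.ball z r) < ⊤)
    (hu : IntegrableOn u Ω μ)
    (hbound : ∀ y, |v y - c'| ≤ |u y - c| / δ)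
    (htr : HasTraceAt μ Ω u z c) :
    HasTraceAt μ Ω v z c' := by
  have hfin' : ∀ r : ℝ, μ (Metric.ball z r ∩ Ω) < ⊤ := by
    intro r
    rcases lt_or_ge 0 r with hr | hr
    · exact lt_of_le_of_lt (measure_mono inter_subset_left) (hfin r hr)
    · simp [Metric.ball_eq_empty.mpr hr]
  have key : ∀ r : ℝ,
      (⨍ y in Metric.ball z r ∩ Ω, |v y - c'| ∂μ) ≤
        (⨍ y in Metric.ball z r ∩ Ω, |u y - c| ∂μ) / δ := by
    intro r
    set s := Metric.ball z r ∩ Ω with hs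
    have hint : IntegrableOn (fun y => |u y - c| / δ) s μ := by
      have h1 : IntegrableOn u s μ := hu.mono_set inter_subset_right
      have h2 : IntegrableOn (fun _ : X => c) s μ :=
        integrableOn_const (hfin' r).ne enorm_ne_top
      exact ((h1.sub h2).abs).div_const δ
    have hmono : (∫ y in s, |v y - c'| ∂μ) ≤ ∫ y in s, |u y - c| / δ ∂μ :=
      integral_mono_of_nonneg (Eventually.of_forall fun y => abs_nonneg _) hint
        (Eventually.of_forall fun y => hbound y)
    have heq : (∫ y in s, |u y - c| / δ ∂μ) = (∫ y in s, |u y - c| ∂μ) / δ :=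
      integral_div δ _
    rw [setAverage_eq, setAverage_eq, smul_eq_mul, smul_eq_mul]
    refine le_trans (mul_le_mul_of_nonneg_left (hmono.trans heq.le)
      (inv_nonneg.2 ENNReal.toReal_nonneg)) (le_of_eq (by ring))
  have hlow : ∀ r : ℝ, (0:ℝ) ≤ ⨍ y in Metric.ball z r ∩ Ω, |v y - c'| ∂μ := by
    intro r
    rw [setAverage_eq, smul_eq_mul]
    exact mul_nonneg (inv_nonneg.2 ENNReal.toReal_nonneg)
      (integral_nonneg fun y => abs_nonneg _)
  have hup : Tendsto (fun r : ℝ => (⨍ y in Metric.ball z r ∩ Ω, |u y - c| ∂μ) / δ)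
      (nhdsWithin (0:ℝ) (Set.Ioi 0)) (nhds (0:ℝ)) := by
    simpa using htr.div_const δ
  exact tendsto_of_tendsto_of_tendsto_of_le_of_le tendsto_const_nhds hup hlow key


/-- if `Tu = f` `ℋ`-a.e. on `∂Ω`, then for a.e. `t ∈ ℝ` the trace of the
superlevel set satisfies `Tχ_{u>t} = χ_{f>t}` `ℋ`-a.e. on `∂Ω`. -/
theorem trace_of_superlevel_sets {X : Type*} [MetricSpace X] [MeasurableSpace X]
    [BorelSpace X] [CompleteSpace X] (μ H : Measure X)
    (hμ : IsDoubling μ)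
    (hH : ∀ s : Set X, H s = codimOneHausdorff μ s)
    (Ω : Set X) (hΩo : IsOpen Ω) (hΩc : IsConnected Ω) (hΩb : Bornology.IsBounded Ω)
    (u f : X → ℝ)
    (hu : MeasureTheory.IntegrableOn u Ω μ)
    (hf : MeasureTheory.IntegrableOn f (frontier Ω) H)
    (htr : ∀ᵐ z ∂H.restrict (frontier Ω), HasTraceAt μ Ω u z (f z)) :
    ∀ᵐ t : ℝ ∂(volume : Measure ℝ),
      ∀ᵐ z ∂H.restrict (frontier Ω),
        HasTraceAt μ Ω ({y : X | t < u y}.indicator fun _ => (1:ℝ)) z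
          ({y : X | t < f y}.indicator (fun _ => (1:ℝ)) z) := by
  set ν := H.restrict (frontier Ω) with hν
  have hfint : Integrable f ν := hf
  set g : X → ℝ := hfint.1.mk f with hg
  have hgm : Measurable g := hfint.1.stronglyMeasurable_mk.measurable
  have hfg : f =ᵐ[ν] g := hfint.1.ae_eq_mk
  have hgint : Integrable g ν := hfint.congr hfg
  have hms : MeasurableSet {x | g x ≠ 0} := (hgm (measurableSet_singleton (0:ℝ))).compl
  have hsf : SigmaFinite (ν.restrict {x | g x ≠ 0}) := by
    refine ⟨⟨⟨fun n => {x | 1/(n+1 : ℝ) ≤ |g x|} ∪ {x | g x = 0}, fun _ => trivial, ?_, ?_⟩⟩⟩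
    · intro n
      rw [Measure.restrict_apply' hms]
      refine lt_of_le_of_lt (measure_mono ?_)
        (hgint.measure_norm_ge_lt_top (by positivity : (0:ℝ) < 1/(n+1)))
      rintro x ⟨hx | hx, hx0⟩
      · simpa [Real.norm_eq_abs] using hx
      · exact absurd hx hx0
    · ext x
      simp only [mem_iUnion, mem_union, mem_setOf_eq, mem_univ, iff_true]
      rcases eq_or_ne (g x) 0 with h | h
      · exact ⟨0, Or.inr h⟩
      · obtain ⟨n, hn⟩ := exists_nat_one_div_lt (abs_pos.mpr h)
        exact ⟨n, Or.inl hn.le⟩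
  have hcnt : Set.Countable {t : ℝ | 0 < (ν.restrict {x | g x ≠ 0}) {x | g x = t}} :=
    Measure.countable_meas_level_set_pos hgm
  have hBnull : (volume : Measure ℝ)
      (insert (0:ℝ) {t | 0 < (ν.restrict {x | g x ≠ 0}) {x | g x = t}}) = 0 :=
    (hcnt.insert 0).measure_zero _
  have hae : ∀ᵐ t : ℝ ∂(volume : Measure ℝ),
      t ∉ insert (0:ℝ) {t | 0 < (ν.restrict {x | g x ≠ 0}) {x | g x = t}} :=
    measure_eq_zero_iff_ae_notMem.mp hBnull
  -- doubling gives finite balls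
  obtain ⟨C, _, hC⟩ := hμ
  have hfin : ∀ (z : X) (r : ℝ), 0 < r → μ (Metric.ball z r) < ⊤ := by
    intro z r hr
    obtain ⟨_, h2, h3⟩ := hC z (r/2) (by positivity)
    have h4 : (2:ℝ) * (r/2) = r := by ring
    rw [h4] at h2
    exact lt_of_le_of_lt h2 h3
  filter_upwards [hae] with t ht
  simp only [mem_insert_iff, mem_setOf_eq, not_or, not_lt] at ht
  obtain ⟨ht0, htS⟩ := ht
  have h1 : ν {x | g x = t} = 0 := by
    have h2 : (ν.restrict {x | g x ≠ 0}) {x | g x = t} = 0 := le_antisymm htS zero_le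
    have hsub : {x | g x = t} ⊆ {x | g x ≠ 0} := by
      intro x hx
      simp only [mem_setOf_eq] at hx ⊢
      rw [hx]; exact ht0
    rwa [Measure.restrict_apply' hms, inter_eq_left.mpr hsub] at h2
  have hgt : ∀ᵐ z ∂ν, g z ≠ t := by
    rw [ae_iff]
    simpa using h1
  filter_upwards [htr, hfg, hgt] with z hz hfz hgz
  have hft : f z ≠ t := by rw [hfz]; exact hgz
  rcases hft.lt_or_gt with hlt | hlt
  · -- f z < t, boundary value 0
    have hc' : ({y : X | t < f y}.indicator (fun _ => (1:ℝ)) z) = 0 :=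
      indicator_of_notMem (by simpa using hlt.le) _
    rw [hc']
    refine trace_squeeze μ Ω u _ z (f z) 0 (t - f z) (by linarith) (hfin z) hu ?_ hz
    intro y
    by_cases hy : t < u y
    · rw [indicator_of_mem (by simpa using hy)]
      have hle : t - f z ≤ |u y - f z| := le_trans (by linarith) (le_abs_self _)
      simp only [sub_zero, abs_one]
      exact (one_le_div (by linarith)).mpr hle
    · rw [indicator_of_notMem (by simpa using hy)]
      simp only [sub_zero, abs_zero]
      exact div_nonneg (abs_nonneg _) (by linarith)
  · -- t < f z, boundary value 1
    have hc' : ({y : X | t < f y}.indicator (fun _ => (1:ℝ)) z) = 1 :=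
      indicator_of_mem (by simpa using hlt) _
    rw [hc']
    refine trace_squeeze μ Ω u _ z (f z) 1 (f z - t) (by linarith) (hfin z) hu ?_ hz
    intro y
    by_cases hy : t < u y
    · rw [indicator_of_mem (by simpa using hy)]
      simp only [sub_self, abs_zero]
      exact div_nonneg (abs_nonneg _) (by linarith)
    · rw [indicator_of_notMem (by simpa using hy)]
      push_neg at hy
      have hle : f z - t ≤ |u y - f z| := by
        rw [abs_sub_comm]
        exact le_trans (by linarith) (le_abs_self _)
      simp only [zero_sub, abs_neg, abs_one]
      exact (one_le_div (by linarith)).mpr hle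
end

section
/- Under the standing assumptions, if $s,t$ are admissible levels with $s<t$ and $E_s$, $E_t$ are the minimal strong solution sets to the $\mathcal{K}_{A_s,B_s,F_s,G_s}$- and $\mathcal{K}_{A_t,B_t,F_t,G_t}$-obstacle problems respectively (where $A_t\subset A_s$, $B_t\subset B_s$, $F_t\subset F_s$, $G_t\subset G_s$ are superlevel sets), then $\mu(E_t\setminus E_s)=0$, i.e., the family $\{E_t\}$ is nested decreasing in $t$ up to $\mu$-null sets. -/
open MeasureTheory Filter Set Topology
open scoped ENNReal NNReal

section MyAux

set_option linter.unusedSectionVars false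

variable {X : Type*} [MetricSpace X] [MeasurableSpace X]


lemma lipConst_congr {f g : X → ℝ} {x : X} (h : f =ᶠ[𝓝 x] g) :
    lipConst f x = lipConst g x := by
  obtain ⟨ρ, hρ, hb⟩ := Metric.eventually_nhds_iff.1 h
  have hx : f x = g x := hb (by simpa using hρ)
  apply Filter.limsup_congr
  filter_upwards [Ioo_mem_nhdsGT_of_mem (⟨le_refl (0:ℝ), hρ⟩ : (0:ℝ) ∈ Set.Ico 0 ρ)]
    with r hr
  refine biSup_congr fun y hy => ?_
  rw [hb (lt_trans hy hr.2), hx]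

lemma lipConst_add_const (f : X → ℝ) (c : ℝ) (x : X) :
    lipConst (fun y => f y + c) x = lipConst f x := by
  unfold lipConst
  simp only [add_sub_add_right_eq_sub]

lemma lipConst_min_left {a b : X → ℝ} (ha : Continuous a) (hb : Continuous b) {x : X}
    (h : a x < b x) : lipConst (fun y => min (a y) (b y)) x = lipConst a x := by
  apply lipConst_congr
  filter_upwards [ha.continuousAt.eventually_lt hb.continuousAt h] with y hy
  exact min_eq_left hy.le

lemma lipConst_min_right {a b : X → ℝ} (ha : Continuous a) (hb : Continuous b) {x : X}
    (h : b x < a x) : lipConst (fun y => min (a y) (b y)) x = lipConst b x := by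
  apply lipConst_congr
  filter_upwards [hb.continuousAt.eventually_lt ha.continuousAt h] with y hy
  exact min_eq_right hy.le

lemma lipConst_max_left {a b : X → ℝ} (ha : Continuous a) (hb : Continuous b) {x : X}
    (h : b x < a x) : lipConst (fun y => max (a y) (b y)) x = lipConst a x := by
  apply lipConst_congr
  filter_upwards [hb.continuousAt.eventually_lt ha.continuousAt h] with y hy
  exact max_eq_left hy.le

lemma lipConst_max_right {a b : X → ℝ} (ha : Continuous a) (hb : Continuous b) {x : X}
    (h : a x < b x) : lipConst (fun y => max (a y) (b y)) x = lipConst b x := by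
  apply lipConst_congr
  filter_upwards [ha.continuousAt.eventually_lt hb.continuousAt h] with y hy
  exact max_eq_right hy.le

lemma lintegral_lipConst_min_max [OpensMeasurableSpace X]
    (μ : Measure X) {Ω : Set X} (hΩ : MeasurableSet Ω) {a b : X → ℝ}
    (ha : Continuous a) (hb : Continuous b)
    (hN : μ (Ω ∩ {x | a x = b x}) = 0) :
    (∫⁻ x in Ω, lipConst (fun y => min (a y) (b y)) x ∂μ) +
      (∫⁻ x in Ω, lipConst (fun y => max (a y) (b y)) x ∂μ) ≤
    (∫⁻ x in Ω, lipConst a x ∂μ) + ∫⁻ x in Ω, lipConst b x ∂μ := by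
  set S := Ω ∩ {x | a x < b x} with hSdef
  set T := Ω ∩ {x | b x < a x} with hTdef
  set N := Ω ∩ {x | a x = b x} with hNdef
  have hSm : MeasurableSet S := hΩ.inter (measurableSet_lt ha.measurable hb.measurable)
  have hTm : MeasurableSet T := hΩ.inter (measurableSet_lt hb.measurable ha.measurable)
  have hNm : MeasurableSet N := hΩ.inter (measurableSet_eq_fun ha.measurable hb.measurable)
  have hpart : Ω = (S ∪ T) ∪ N := by
    ext x
    constructor
    · intro hx
      rcases lt_trichotomy (a x) (b x) with h|h|h
      · exact Or.inl (Or.inl ⟨hx, h⟩)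
      · exact Or.inr ⟨hx, h⟩
      · exact Or.inl (Or.inr ⟨hx, h⟩)
    · rintro ((⟨h, _⟩|⟨h, _⟩)|⟨h, _⟩) <;> exact h
  have hdisjST : Disjoint S T := by
    rw [Set.disjoint_left]
    rintro x ⟨-, h1⟩ ⟨-, h2⟩
    simp only [Set.mem_setOf_eq] at h1 h2
    exact absurd (h1.trans h2) (lt_irrefl (a x))
  have hdisjN : Disjoint (S ∪ T) N := by
    rw [Set.disjoint_left]
    rintro x (⟨-, h1⟩|⟨-, h1⟩) ⟨-, h2⟩ <;>
      simp only [Set.mem_setOf_eq] at h1 h2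
    · exact absurd h2 h1.ne
    · exact absurd h2 h1.ne'
  have hrestrict : μ.restrict Ω = μ.restrict S + μ.restrict T + μ.restrict N := by
    rw [hpart, Measure.restrict_union hdisjN hNm, Measure.restrict_union hdisjST hTm]
  have hNz : μ.restrict N = 0 := Measure.restrict_eq_zero.2 hN
  have split : ∀ f : X → ℝ≥0∞,
      ∫⁻ x in Ω, f x ∂μ = (∫⁻ x in S, f x ∂μ) + ∫⁻ x in T, f x ∂μ := by
    intro f
    rw [hrestrict, lintegral_add_measure, lintegral_add_measure, hNz,
      lintegral_zero_measure, add_zero]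
  have hminS : ∫⁻ x in S, lipConst (fun y => min (a y) (b y)) x ∂μ
      = ∫⁻ x in S, lipConst a x ∂μ :=
    setLIntegral_congr_fun hSm (fun x hx => lipConst_min_left ha hb hx.2)
  have hminT : ∫⁻ x in T, lipConst (fun y => min (a y) (b y)) x ∂μ
      = ∫⁻ x in T, lipConst b x ∂μ :=
    setLIntegral_congr_fun hTm (fun x hx => lipConst_min_right ha hb hx.2)
  have hmaxS : ∫⁻ x in S, lipConst (fun y => max (a y) (b y)) x ∂μ
      = ∫⁻ x in S, lipConst b x ∂μ :=
    setLIntegral_congr_fun hSm (fun x hx => lipConst_max_right ha hb hx.2)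
  have hmaxT : ∫⁻ x in T, lipConst (fun y => max (a y) (b y)) x ∂μ
      = ∫⁻ x in T, lipConst a x ∂μ :=
    setLIntegral_congr_fun hTm (fun x hx => lipConst_max_left ha hb hx.2)
  rw [split (lipConst (fun y => min (a y) (b y))), split (lipConst (fun y => max (a y) (b y))),
    split (lipConst a), split (lipConst b), hminS, hminT, hmaxS, hmaxT]
  exact le_of_eq (by ring)

lemma exists_good_delta [OpensMeasurableSpace X]
    (μ : Measure X) {Ω : Set X} (hfin : μ Ω ≠ ⊤) {a b : X → ℝ}
    (ha : Continuous a) (hb : Continuous b) {ε : ℝ} (hε : 0 < ε) :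
    ∃ δ : ℝ, δ ∈ Set.Ioo 0 ε ∧ μ (Ω ∩ {x | a x = b x + δ}) = 0 := by
  have hfm : IsFiniteMeasure (μ.restrict Ω) :=
    ⟨by rwa [Measure.restrict_apply_univ, lt_top_iff_ne_top]⟩
  have hcnt := Measure.countable_meas_level_set_pos (μ := μ.restrict Ω)
    (g := fun x => a x - b x) ((ha.sub hb).measurable)
  have hunc : ¬ (Set.Ioo (0:ℝ) ε).Countable := by
    intro hcon
    rw [← Cardinal.le_aleph0_iff_set_countable, Cardinal.mk_Ioo_real hε] at hcon
    exact absurd hcon (not_le.2 Cardinal.aleph0_lt_continuum)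
  obtain ⟨δ, hδIoo, hδ⟩ : ∃ δ ∈ Set.Ioo (0:ℝ) ε,
      δ ∉ {t : ℝ | 0 < μ.restrict Ω {x | a x - b x = t}} := by
    by_contra hcon
    push_neg at hcon
    exact hunc (hcnt.mono hcon)
  refine ⟨δ, hδIoo, ?_⟩
  have h0 : μ.restrict Ω {x | a x - b x = δ} = 0 := by
    simp only [Set.mem_setOf_eq, not_lt, nonpos_iff_eq_zero] at hδ
    exact hδ
  have hms : MeasurableSet {x | a x - b x = δ} :=
    measurableSet_eq_fun (ha.sub hb).measurable measurable_const
  rw [Measure.restrict_apply hms] at h0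
  have : Ω ∩ {x | a x = b x + δ} = {x | a x - b x = δ} ∩ Ω := by
    ext x
    simp only [Set.mem_inter_iff, Set.mem_setOf_eq]
    constructor
    · rintro ⟨h1, h2⟩; exact ⟨by linarith, h1⟩
    · rintro ⟨h1, h2⟩; exact ⟨h2, by linarith⟩
  rw [this]
  exact h0

lemma le_liminf_add' {f g : ℕ → ℝ≥0∞} :
    liminf f atTop + liminf g atTop ≤ liminf (fun n => f n + g n) atTop := by
  refine (le_liminf_iff).2 fun c hc => ?_
  rcases eq_or_ne (liminf f atTop) 0 with h0|h0
  · rw [h0, zero_add] at hc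
    filter_upwards [eventually_lt_of_lt_liminf hc] with n hn
    exact hn.trans_le le_add_self
  rcases eq_or_ne (liminf g atTop) 0 with h1|h1
  · rw [h1, add_zero] at hc
    filter_upwards [eventually_lt_of_lt_liminf hc] with n hn
    exact hn.trans_le le_self_add
  obtain ⟨c1, hc1, c2, hc2, hcc⟩ := ENNReal.exists_lt_add_of_lt_add hc h0 h1
  filter_upwards [eventually_lt_of_lt_liminf hc1, eventually_lt_of_lt_liminf hc2] with n h1' h2'
  exact hcc.trans_le (add_le_add h1'.le h2'.le)

lemma liminf_const_add_le {g : ℕ → ℝ≥0∞} {c : ℝ≥0∞} :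
    liminf (fun n => c + g n) atTop ≤ c + liminf g atTop := by
  refine ENNReal.le_of_forall_pos_le_add fun ε hε hlt => ?_
  have hgne : liminf g atTop ≠ ⊤ := by
    intro h
    rw [h] at hlt
    simp at hlt
  have hL : liminf g atTop < liminf g atTop + (ε : ℝ≥0∞) :=
    ENNReal.lt_add_right hgne (by exact_mod_cast hε.ne')
  refine liminf_le_of_frequently_le' ((frequently_lt_of_liminf_lt (by isBoundedDefault) hL).mono fun n hn => ?_)
  calc c + g n ≤ c + (liminf g atTop + (ε : ℝ≥0∞)) := add_le_add le_rfl hn.le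
    _ = c + liminf g atTop + (ε : ℝ≥0∞) := (add_assoc _ _ _).symm

lemma min_abs_bound (p q s t δ : ℝ) (hδ : 0 ≤ δ) :
    |min p (q + δ) - min s t| ≤ |p - s| + (|q - t| + δ) := by
  have h := abs_min_sub_min_le_max p (q + δ) s t
  have h2 : |q + δ - t| ≤ |q - t| + δ := by
    calc |q + δ - t| = |(q - t) + δ| := by ring_nf
      _ ≤ |q - t| + |δ| := abs_add_le _ _
      _ = |q - t| + δ := by rw [abs_of_nonneg hδ]
  refine h.trans (max_le ?_ ?_)
  · have := abs_nonneg (q - t); linarith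
  · have := abs_nonneg (p - s); linarith

lemma max_abs_bound (p q s t δ : ℝ) (hδ : 0 ≤ δ) :
    |max p (q + δ) - max s t| ≤ |p - s| + (|q - t| + δ) := by
  have h := abs_max_sub_max_le_max p (q + δ) s t
  have h2 : |q + δ - t| ≤ |q - t| + δ := by
    calc |q + δ - t| = |(q - t) + δ| := by ring_nf
      _ ≤ |q - t| + |δ| := abs_add_le _ _
      _ = |q - t| + δ := by rw [abs_of_nonneg hδ]
  refine h.trans (max_le ?_ ?_)
  · have := abs_nonneg (q - t); linarith
  · have := abs_nonneg (p - s); linarith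




lemma TV_le_liminf (μ : Measure X) {U : Set X} {u : X → ℝ} (w : ℕ → X → ℝ)
    (h1 : ∀ n, LocallyLipschitz (w n))
    (h2 : ∀ K : Set X, K ⊆ U → IsCompact K →
      Filter.Tendsto (fun n => ∫ x in K, |w n x - u x| ∂μ) Filter.atTop (nhds (0:ℝ))) :
    TV μ u U ≤ Filter.liminf (fun n => ∫⁻ x in U, lipConst (w n) x ∂μ) Filter.atTop :=
  iInf₂_le w ⟨h1, h2⟩

lemma exists_TV_seq (μ : Measure X) {U : Set X} {u : X → ℝ} {c : ℝ≥0∞}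
    (hc : TV μ u U < c) :
    ∃ w : ℕ → X → ℝ, (∀ n, LocallyLipschitz (w n)) ∧
      (∀ K : Set X, K ⊆ U → IsCompact K →
        Filter.Tendsto (fun n => ∫ x in K, |w n x - u x| ∂μ) Filter.atTop (nhds (0:ℝ))) ∧
      Filter.liminf (fun n => ∫⁻ x in U, lipConst (w n) x ∂μ) Filter.atTop < c := by
  by_contra hcon
  push_neg at hcon
  have : c ≤ TV μ u U := le_iInf fun w => le_iInf fun hw => hcon w hw.1 hw.2
  exact absurd this (not_le.2 hc)

lemma TV_submod [BorelSpace X] (μ : Measure X) {Ω : Set X}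
    (hΩ : MeasurableSet Ω) (hfin : μ Ω ≠ ⊤)
    {u v : X → ℝ} (hu : IntegrableOn u Ω μ) (hv : IntegrableOn v Ω μ) :
    TV μ (fun x => min (u x) (v x)) Ω + TV μ (fun x => max (u x) (v x)) Ω ≤
      TV μ u Ω + TV μ v Ω := by
  refine ENNReal.le_of_forall_pos_le_add fun ε hε hlt => ?_
  have hTu : TV μ u Ω ≠ ⊤ := (ENNReal.add_lt_top.1 hlt).1.ne
  have hTv : TV μ v Ω ≠ ⊤ := (ENNReal.add_lt_top.1 hlt).2.ne
  set ε2 : ℝ≥0∞ := (ε : ℝ≥0∞) / 2 with hε2def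
  have hε2pos : ε2 ≠ 0 := by
    simp only [hε2def, ne_eq, ENNReal.div_eq_zero_iff, ENNReal.coe_eq_zero, ENNReal.ofNat_ne_top,
      or_false]
    exact hε.ne'
  -- sequence for u, with all energies < TV u + ε2
  obtain ⟨a0, hla0, hca0, hlima0⟩ :=
    exists_TV_seq μ (ENNReal.lt_add_right hTu hε2pos : TV μ u Ω < TV μ u Ω + ε2)
  obtain ⟨φ, hφmono, hφ⟩ := Filter.extraction_of_frequently_atTop
    (frequently_lt_of_liminf_lt (by isBoundedDefault) hlima0)
  set a : ℕ → X → ℝ := fun n => a0 (φ n) with hadef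
  have hla : ∀ n, LocallyLipschitz (a n) := fun n => hla0 (φ n)
  have hca : ∀ K : Set X, K ⊆ Ω → IsCompact K →
      Filter.Tendsto (fun n => ∫ x in K, |a n x - u x| ∂μ) Filter.atTop (nhds (0:ℝ)) :=
    fun K hK hKc => (hca0 K hK hKc).comp hφmono.tendsto_atTop
  -- sequence for v
  obtain ⟨b, hlb, hcb, hlimb⟩ :=
    exists_TV_seq μ (ENNReal.lt_add_right hTv hε2pos : TV μ v Ω < TV μ v Ω + ε2)
  -- good perturbations
  have hδex : ∀ n : ℕ, ∃ δ : ℝ, δ ∈ Set.Ioo 0 (1/(n+1) : ℝ) ∧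
      μ (Ω ∩ {x | a n x = b n x + δ}) = 0 := fun n =>
    exists_good_delta μ hfin (hla n).continuous (hlb n).continuous
      (by positivity)
  choose δ hδIoo hδnull using hδex
  have hδ0 : Filter.Tendsto δ Filter.atTop (nhds (0:ℝ)) := by
    refine squeeze_zero (fun n => (hδIoo n).1.le) (fun n => (hδIoo n).2.le) ?_
    exact tendsto_one_div_add_atTop_nhds_zero_nat
  set b' : ℕ → X → ℝ := fun n x => b n x + δ n with hb'def
  have hlb' : ∀ n, LocallyLipschitz (b' n) := by
    intro n
    have h1 : LipschitzWith 1 (fun t : ℝ => t + δ n) :=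
      LipschitzWith.of_dist_le_mul fun x y => by
        simp [Real.dist_eq]
    exact h1.locallyLipschitz.comp (hlb n)
  set m : ℕ → X → ℝ := fun n x => min (a n x) (b' n x) with hmdef
  set M : ℕ → X → ℝ := fun n x => max (a n x) (b' n x) with hMdef
  have hlm : ∀ n, LocallyLipschitz (m n) := fun n => (hla n).min (hlb' n)
  have hlM : ∀ n, LocallyLipschitz (M n) := fun n => (hla n).max (hlb' n)
  -- convergence of m and M
  have hconv : ∀ K : Set X, K ⊆ Ω → IsCompact K →
      (Filter.Tendsto (fun n => ∫ x in K, |m n x - min (u x) (v x)| ∂μ)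
        Filter.atTop (nhds (0:ℝ))) ∧
      Filter.Tendsto (fun n => ∫ x in K, |M n x - max (u x) (v x)| ∂μ)
        Filter.atTop (nhds (0:ℝ)) := by
    intro K hK hKc
    have hKfin : μ K ≠ ⊤ := ((measure_mono hK).trans_lt (lt_top_iff_ne_top.2 hfin)).ne
    have hKm : MeasurableSet K := hKc.isClosed.measurableSet
    have hIa : ∀ n, IntegrableOn (a n) K μ := by
      intro n
      obtain ⟨C, hC⟩ := hKc.exists_bound_of_continuousOn (hla n).continuous.continuousOn
      exact Measure.integrableOn_of_bounded hKfin (hla n).continuous.aestronglyMeasurable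
        ((ae_restrict_iff' hKm).2 (ae_of_all _ hC))
    have hIb : ∀ n, IntegrableOn (b n) K μ := by
      intro n
      obtain ⟨C, hC⟩ := hKc.exists_bound_of_continuousOn (hlb n).continuous.continuousOn
      exact Measure.integrableOn_of_bounded hKfin (hlb n).continuous.aestronglyMeasurable
        ((ae_restrict_iff' hKm).2 (ae_of_all _ hC))
    have hIu : IntegrableOn u K μ := hu.mono_set hK
    have hIv : IntegrableOn v K μ := hv.mono_set hK
    have hI1 : ∀ n, IntegrableOn (fun x => |a n x - u x|) K μ := by
      intro n
      have := ((hIa n).sub hIu).abs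
      exact this
    have hI2 : ∀ n, IntegrableOn (fun x => |b n x - v x|) K μ := by
      intro n
      have := ((hIb n).sub hIv).abs
      exact this
    have hIc : ∀ n, IntegrableOn (fun _ => δ n) K μ := fun n =>
      integrableOn_const hKfin
    have hI23 : ∀ n, IntegrableOn (fun x => |b n x - v x| + δ n) K μ := by
      intro n
      exact (hI2 n).add (hIc n)
    have hIg : ∀ n, IntegrableOn
        (fun x => |a n x - u x| + (|b n x - v x| + δ n)) K μ := by
      intro n
      exact (hI1 n).add (hI23 n)
    have hgsum : ∀ n, ∫ x in K, (|a n x - u x| + (|b n x - v x| + δ n)) ∂μ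
        = (∫ x in K, |a n x - u x| ∂μ) +
          ((∫ x in K, |b n x - v x| ∂μ) + (μ K).toReal * δ n) := by
      intro n
      rw [integral_add (hI1 n) (hI23 n), integral_add (hI2 n) (hIc n),
        setIntegral_const, smul_eq_mul]
      rfl
    have hG : Filter.Tendsto (fun n => (∫ x in K, |a n x - u x| ∂μ) +
        ((∫ x in K, |b n x - v x| ∂μ) + (μ K).toReal * δ n)) Filter.atTop (nhds (0:ℝ)) := by
      have h3 : Filter.Tendsto (fun n => (μ K).toReal * δ n) Filter.atTop
          (nhds ((μ K).toReal * 0)) := hδ0.const_mul _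
      rw [mul_zero] at h3
      have := (hca K hK hKc).add ((hcb K hK hKc).add h3)
      simpa using this
    constructor
    · refine squeeze_zero (fun n => integral_nonneg fun x => abs_nonneg _) (fun n => ?_) hG
      refine le_trans (integral_mono_of_nonneg (ae_of_all _ fun x => abs_nonneg _)
        (hIg n) (ae_of_all _ fun x => ?_)) (le_of_eq (hgsum n))
      exact min_abs_bound _ _ _ _ _ (hδIoo n).1.le
    · refine squeeze_zero (fun n => integral_nonneg fun x => abs_nonneg _) (fun n => ?_) hG
      refine le_trans (integral_mono_of_nonneg (ae_of_all _ fun x => abs_nonneg _)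
        (hIg n) (ae_of_all _ fun x => ?_)) (le_of_eq (hgsum n))
      exact max_abs_bound _ _ _ _ _ (hδIoo n).1.le
  have h1 : TV μ (fun x => min (u x) (v x)) Ω ≤
      Filter.liminf (fun n => ∫⁻ x in Ω, lipConst (m n) x ∂μ) Filter.atTop :=
    TV_le_liminf μ m hlm fun K hK hKc => (hconv K hK hKc).1
  have h2 : TV μ (fun x => max (u x) (v x)) Ω ≤
      Filter.liminf (fun n => ∫⁻ x in Ω, lipConst (M n) x ∂μ) Filter.atTop :=
    TV_le_liminf μ M hlM fun K hK hKc => (hconv K hK hKc).2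
  have key : ∀ n, (∫⁻ x in Ω, lipConst (m n) x ∂μ) + (∫⁻ x in Ω, lipConst (M n) x ∂μ)
      ≤ (TV μ u Ω + ε2) + ∫⁻ x in Ω, lipConst (b n) x ∂μ := by
    intro n
    have hkey := lintegral_lipConst_min_max μ hΩ (b := fun y => b n y + δ n) (hla n).continuous
      ((hlb n).continuous.add continuous_const) (hδnull n)
    have hbb : (fun x => lipConst (fun y => b n y + δ n) x) = fun x => lipConst (b n) x :=
      funext fun x => lipConst_add_const (b n) (δ n) x
    rw [hbb] at hkey
    exact hkey.trans (add_le_add (hφ n).le le_rfl)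
  calc TV μ (fun x => min (u x) (v x)) Ω + TV μ (fun x => max (u x) (v x)) Ω
      ≤ Filter.liminf (fun n => ∫⁻ x in Ω, lipConst (m n) x ∂μ) Filter.atTop +
        Filter.liminf (fun n => ∫⁻ x in Ω, lipConst (M n) x ∂μ) Filter.atTop :=
        add_le_add h1 h2
    _ ≤ Filter.liminf (fun n => (∫⁻ x in Ω, lipConst (m n) x ∂μ) +
        ∫⁻ x in Ω, lipConst (M n) x ∂μ) Filter.atTop := le_liminf_add'
    _ ≤ Filter.liminf (fun n => (TV μ u Ω + ε2) +
        ∫⁻ x in Ω, lipConst (b n) x ∂μ) Filter.atTop :=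
        Filter.liminf_le_liminf (Filter.Eventually.of_forall key)
    _ ≤ (TV μ u Ω + ε2) +
        Filter.liminf (fun n => ∫⁻ x in Ω, lipConst (b n) x ∂μ) Filter.atTop :=
        liminf_const_add_le
    _ ≤ (TV μ u Ω + ε2) + (TV μ v Ω + ε2) := add_le_add le_rfl hlimb.le
    _ = TV μ u Ω + TV μ v Ω + (ε2 + ε2) := by ring
    _ = TV μ u Ω + TV μ v Ω + (ε : ℝ≥0∞) := by rw [hε2def, ENNReal.add_halves]



lemma hasTraceAt_of_bound (μ : Measure X)
    {Ω : Set X} {u v w : X → ℝ} {z : X} {τu τv τ : ℝ}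
    (hball : ∀ r : ℝ, μ (Metric.ball z r) ≠ ⊤)
    (hu : MeasureTheory.IntegrableOn u Ω μ) (hv : MeasureTheory.IntegrableOn v Ω μ)
    (hw : ∀ x, |w x - τ| ≤ |u x - τu| + |v x - τv|)
    (htu : HasTraceAt μ Ω u z τu) (htv : HasTraceAt μ Ω v z τv) :
    HasTraceAt μ Ω w z τ := by
  unfold HasTraceAt at htu htv ⊢
  have hsum : Filter.Tendsto (fun r : ℝ => (⨍ y in Metric.ball z r ∩ Ω, |u y - τu| ∂μ) +
      ⨍ y in Metric.ball z r ∩ Ω, |v y - τv| ∂μ) (nhdsWithin (0:ℝ) (Set.Ioi 0))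
      (nhds ((0:ℝ) + 0)) := htu.add htv
  rw [add_zero] at hsum
  refine squeeze_zero' ?_ ?_ hsum
  · refine Filter.Eventually.of_forall fun r => ?_
    rw [setAverage_eq, smul_eq_mul]
    exact mul_nonneg (by positivity) (integral_nonneg fun y => abs_nonneg _)
  · refine Filter.Eventually.of_forall fun r => ?_
    set S := Metric.ball z r ∩ Ω with hS
    have hSfin : μ S ≠ ⊤ := ((measure_mono Set.inter_subset_left).trans_lt
      (lt_top_iff_ne_top.2 (hball r))).ne
    have hIu : MeasureTheory.IntegrableOn (fun y => |u y - τu|) S μ := by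
      have hc : MeasureTheory.IntegrableOn (fun _ : X => τu) S μ :=
        integrableOn_const hSfin
      have := ((hu.mono_set Set.inter_subset_right).sub hc).abs
      exact this
    have hIv : MeasureTheory.IntegrableOn (fun y => |v y - τv|) S μ := by
      have hc : MeasureTheory.IntegrableOn (fun _ : X => τv) S μ :=
        integrableOn_const hSfin
      have := ((hv.mono_set Set.inter_subset_right).sub hc).abs
      exact this
    rw [setAverage_eq, setAverage_eq, setAverage_eq, smul_eq_mul, smul_eq_mul, smul_eq_mul,
      ← mul_add]
    refine mul_le_mul_of_nonneg_left ?_ (by positivity)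
    calc ∫ y in S, |w y - τ| ∂μ ≤ ∫ y in S, (|u y - τu| + |v y - τv|) ∂μ :=
        integral_mono_of_nonneg (Filter.Eventually.of_forall fun y => abs_nonneg _) (hIu.add hIv)
          (Filter.Eventually.of_forall fun y => hw y)
      _ = _ := integral_add hIu hIv

end MyAux

/-- minimal strong solution sets for nested (superlevel) data are nested:
if `s < t` then `μ(E_t \ E_s) = 0`. -/
theorem minimal_strong_solution_sets_nested {X : Type*} [MetricSpace X] [MeasurableSpace X]
    [BorelSpace X] [CompleteSpace X] (μ H : Measure X)
    (hμ : IsDoubling μ)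
    (hH : ∀ s : Set X, H s = codimOneHausdorff μ s)
    (Ω : Set X) (hΩo : IsOpen Ω) (hΩc : IsConnected Ω) (hΩb : Bornology.IsBounded Ω)
    (hΩm : μ Ωᶜ ≠ 0)
    (hHfin : H (frontier Ω) < ⊤)
    (hHdbl : BoundaryDoubling H Ω)
    (hAR : LowerCodimOneAR μ H Ω)
    (hpts : ∀ z ∈ frontier Ω, H {z} = 0)
    (hunif : ∃ A : ℝ, IsUniformDomain Ω A)
    (hpmc : PosMeanCurvature μ Ω)
    (s t : ℝ) (hst : s < t)
    (As Bs Fs Gs At Bt Ft Gt : Set X)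
    -- admissibility of the level-`s` data
    (hAs : ∃ U, IsOpen U ∧ As = U ∩ closure Ω) (hBs : ∃ U, IsOpen U ∧ Bs = U ∩ closure Ω)
    (hFs : IsOpen Fs) (hGs : IsOpen Gs) (hFGs : Fs ⊆ Gs)
    (hPFs : perim μ Fs Set.univ < ⊤) (hPGs : perim μ Gs Set.univ < ⊤)
    (hbds : H (frontier Ω ∩ ((closure As ∩ closure (closure Ω \ As)) ∪ frontier Fs ∪ frontier Gs)) = 0)
    (htrs : ∀ᵐ z ∂H.restrict (frontier Ω), (z ∈ Fs → z ∈ Bs) ∧ (z ∈ As → z ∈ Gs))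
    -- admissibility of the level-`t` data
    (hAt : ∃ U, IsOpen U ∧ At = U ∩ closure Ω) (hBt : ∃ U, IsOpen U ∧ Bt = U ∩ closure Ω)
    (hFt : IsOpen Ft) (hGt : IsOpen Gt) (hFGt : Ft ⊆ Gt)
    (hPFt : perim μ Ft Set.univ < ⊤) (hPGt : perim μ Gt Set.univ < ⊤)
    (hbdt : H (frontier Ω ∩ ((closure At ∩ closure (closure Ω \ At)) ∪ frontier Ft ∪ frontier Gt)) = 0)
    (htrt : ∀ᵐ z ∂H.restrict (frontier Ω), (z ∈ Ft → z ∈ Bt) ∧ (z ∈ At → z ∈ Gt))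
    -- the data are superlevel sets, hence nested
    (hAst : At ⊆ As) (hBst : Bt ⊆ Bs) (hFst : Ft ⊆ Fs) (hGst : Gt ⊆ Gs)
    (Es Et : Set X)
    (hEs : IsMinimalStrongSolutionSet μ H Ω As Bs Fs Gs Es)
    (hEt : IsMinimalStrongSolutionSet μ H Ω At Bt Ft Gt Et) :
    μ (Et \ Es) = 0 := by
  classical
  have hball : ∀ (x : X) (r : ℝ), μ (Metric.ball x r) ≠ ⊤ := by
    intro x r
    rcases le_or_gt r 0 with h|h
    · simp [Metric.ball_eq_empty.2 h]
    · obtain ⟨C, hC1, hC⟩ := hμ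
      have h2 := (hC x r h).2.2
      have h3 : μ (Metric.ball x r) ≤ C * μ (Metric.ball x r) :=
        le_mul_of_one_le_left zero_le hC1
      exact (h3.trans_lt h2).ne
  have hμΩ : μ Ω ≠ ⊤ := by
    obtain ⟨x, hx⟩ := hΩc.nonempty
    obtain ⟨r, hr⟩ := hΩb.subset_closedBall x
    exact ((measure_mono (hr.trans (Metric.closedBall_subset_ball (lt_add_one r)))).trans_lt
      (lt_top_iff_ne_top.2 (hball x (r + 1)))).ne
  have hminabs : ∀ p q s' t' : ℝ, |min p q - min s' t'| ≤ |p - s'| + |q - t'| := fun p q s' t' =>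
    (abs_min_sub_min_le_max p q s' t').trans
      (max_le (le_add_of_nonneg_right (abs_nonneg _)) (le_add_of_nonneg_left (abs_nonneg _)))
  have hmaxabs : ∀ p q s' t' : ℝ, |max p q - max s' t'| ≤ |p - s'| + |q - t'| := fun p q s' t' =>
    (abs_max_sub_max_le_max p q s' t').trans
      (max_le (le_add_of_nonneg_right (abs_nonneg _)) (le_add_of_nonneg_left (abs_nonneg _)))
  set χs := Es.indicator (fun _ => (1:ℝ)) with hχs
  set χt := Et.indicator (fun _ => (1:ℝ)) with hχt
  obtain ⟨⟨hmemS, hoptS⟩, -⟩ := hEs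
  obtain ⟨⟨hmemT, hoptT⟩, hminT⟩ := hEt
  obtain ⟨hintS, hTVS, hobsS, htrS⟩ := hmemS
  obtain ⟨hintT, hTVT, hobsT, htrT⟩ := hmemT
  set minf : X → ℝ := fun x => min (χs x) (χt x) with hminf
  set maxf : X → ℝ := fun x => max (χs x) (χt x) with hmaxf
  have hminI : (Es ∩ Et).indicator (fun _ => (1:ℝ)) = minf := by
    funext x
    by_cases hs : x ∈ Es <;> by_cases ht : x ∈ Et <;>
      simp [hminf, hχs, hχt, Set.indicator_apply, hs, ht] <;> norm_num
  have hintmin : MeasureTheory.IntegrableOn minf Ω μ := by exact hintS.inf hintT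
  have hintmax : MeasureTheory.IntegrableOn maxf Ω μ := by exact hintS.sup hintT
  have hsub := TV_submod μ hΩo.measurableSet hμΩ hintS hintT
  have hTVmm : TV μ minf Ω + TV μ maxf Ω ≤ TV μ χs Ω + TV μ χt Ω := by
    rw [hminf, hmaxf]; exact hsub
  have hsumfin : TV μ χs Ω + TV μ χt Ω < ⊤ := ENNReal.add_lt_top.2 ⟨hTVS, hTVT⟩
  have hTVmaxfin : TV μ maxf Ω < ⊤ := lt_of_le_of_lt (le_trans le_add_self hTVmm) hsumfin
  have hTVminfin : TV μ minf Ω < ⊤ := lt_of_le_of_lt (le_trans le_self_add hTVmm) hsumfin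
  have hindAt : ∀ x, At.indicator (fun _ => (1:ℝ)) x ≤ As.indicator (fun _ => (1:ℝ)) x :=
    fun x => Set.indicator_le_indicator_of_subset hAst (fun _ => zero_le_one) x
  have hindBt : ∀ x, Bt.indicator (fun _ => (1:ℝ)) x ≤ Bs.indicator (fun _ => (1:ℝ)) x :=
    fun x => Set.indicator_le_indicator_of_subset hBst (fun _ => zero_le_one) x
  have hindFt : ∀ x, Ft.indicator (fun _ => (1:ℝ)) x ≤ Fs.indicator (fun _ => (1:ℝ)) x :=
    fun x => Set.indicator_le_indicator_of_subset hFst (fun _ => zero_le_one) x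
  have hindGt : ∀ x, Gt.indicator (fun _ => (1:ℝ)) x ≤ Gs.indicator (fun _ => (1:ℝ)) x :=
    fun x => Set.indicator_le_indicator_of_subset hGst (fun _ => zero_le_one) x
  -- the union function is admissible for the level-s problem
  have hmemmax : memKSet μ H Ω As Bs Fs Gs maxf := by
    refine ⟨hintmax, hTVmaxfin, ?_, ?_⟩
    · filter_upwards [hobsS, hobsT] with x hxs hxt
      simp only [setObstacle] at hxs hxt ⊢
      constructor
      · exact le_trans hxs.1 (EReal.coe_le_coe_iff.2 (le_max_left _ _))
      · rw [EReal.coe_le_coe_iff]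
        refine max_le (EReal.coe_le_coe_iff.1 hxs.2) ?_
        exact le_trans (EReal.coe_le_coe_iff.1 hxt.2) (hindBt x)
    · filter_upwards [htrS, htrT] with z hzs hzt
      obtain ⟨τs, hτs, hτs1, hτs2⟩ := hzs
      obtain ⟨τt, hτt, hτt1, hτt2⟩ := hzt
      refine ⟨max τs τt, ?_, ?_, ?_⟩
      · exact hasTraceAt_of_bound μ (fun r => hball z r) hintS hintT
          (fun x => hmaxabs (χs x) (χt x) τs τt) hτs hτt
      · exact hτs1.trans (le_max_left _ _)
      · exact max_le hτs2 (hτt2.trans (hindGt z))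
  have hTVsmax : TV μ χs Ω ≤ TV μ maxf Ω := hoptS maxf hmemmax
  have hTVmin_le : TV μ minf Ω ≤ TV μ χt Ω := by
    have h2 : TV μ minf Ω + TV μ maxf Ω ≤ TV μ χt Ω + TV μ maxf Ω := by
      calc TV μ minf Ω + TV μ maxf Ω ≤ TV μ χs Ω + TV μ χt Ω := hTVmm
        _ ≤ TV μ maxf Ω + TV μ χt Ω := add_le_add hTVsmax le_rfl
        _ = TV μ χt Ω + TV μ maxf Ω := add_comm _ _
    exact (ENNReal.add_le_add_iff_right hTVmaxfin.ne).1 h2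
  -- the intersection function is admissible for the level-t problem
  have hmemmin : memKSet μ H Ω At Bt Ft Gt minf := by
    refine ⟨hintmin, lt_of_le_of_lt hTVmin_le hTVT, ?_, ?_⟩
    · filter_upwards [hobsS, hobsT] with x hxs hxt
      simp only [setObstacle] at hxs hxt ⊢
      constructor
      · rw [EReal.coe_le_coe_iff]
        refine le_min ?_ (EReal.coe_le_coe_iff.1 hxt.1)
        exact le_trans (hindAt x) (EReal.coe_le_coe_iff.1 hxs.1)
      · rw [EReal.coe_le_coe_iff]
        exact le_trans (min_le_right _ _) (EReal.coe_le_coe_iff.1 hxt.2)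
    · filter_upwards [htrS, htrT] with z hzs hzt
      obtain ⟨τs, hτs, hτs1, hτs2⟩ := hzs
      obtain ⟨τt, hτt, hτt1, hτt2⟩ := hzt
      refine ⟨min τs τt, ?_, ?_, ?_⟩
      · exact hasTraceAt_of_bound μ (fun r => hball z r) hintS hintT
          (fun x => hminabs (χs x) (χt x) τs τt) hτs hτt
      · exact le_min (le_trans (hindFt z) hτs1) hτt1
      · exact le_trans (min_le_right _ _) hτt2
  have hsolset : IsStrongSolutionSet μ H Ω At Bt Ft Gt (Es ∩ Et) := by
    refine ⟨?_, ?_⟩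
    · rw [hminI]
      exact hmemmin
    · intro w hw
      rw [hminI]
      exact le_trans hTVmin_le (hoptT w hw)
  have hfinal := hminT (Es ∩ Et) hsolset
  have hsetid : Et \ (Es ∩ Et) = Et \ Es := by
    ext x; simp only [Set.mem_diff, Set.mem_inter_iff]; tauto
  rwa [hsetid] at hfinal
end
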